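/- Consider an n-bus network with admittance matrix Y ∈ ℂ^{n×n} whose bus set is partitioned as {0} ∪ A₁ ∪ ⋯ ∪ A_m, where 0 is the slack bus with fixed voltage v₀ and Y_{ab} = Y_{ba} = 0 whenever a ∈ A_j and b ∈ A_k with j ≠ k. Each non-slack bus is a PQ bus (enforcing V_i · conj((YV)_i) = s_i) or a PV bus (enforcing Re(V_i · conj((YV)_i)) = p_i and |V_i| = w_i). For each j, let the j-th subnetwork be the network on buses {0} ∪ A_j with admittance matrix the corresponding principal submatrix of Y, the same bus specifications, and slack voltage v₀. Then the cardinality of the solution set of the full network equals the product over j = 1,…,m of the cardinalities of the solution sets of the m subnetworks. -/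

import Mathlib

open scoped Classical

lemma aux_mulVec {n : ℕ} (Y : Matrix (Fin n) (Fin n) ℂ) (P : Fin n → Prop)
    [Fintype {k : Fin n // P k}] (V : Fin n → ℂ) (W : {k : Fin n // P k} → ℂ) (i : Fin n) (hi : P i)
    (hW : ∀ k : {k : Fin n // P k}, W k = V k.val)
    (hz : ∀ k, ¬ P k → Y i k = 0) :
    (Y.submatrix Subtype.val Subtype.val).mulVec W ⟨i, hi⟩ = Y.mulVec V i := by
  classical
  simp only [Matrix.mulVec, dotProduct, Matrix.submatrix_apply]
  have h1 : ∀ k, ¬P k → Y i k * V k = 0 := fun k hk => by rw [hz k hk, zero_mul]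
  calc ∑ k : {k : Fin n // P k}, Y i k.val * W k
      = ∑ k : {k : Fin n // P k}, Y i k.val * V k.val :=
        Finset.sum_congr rfl (fun k _ => by rw [hW k])
    _ = ∑ k ∈ Finset.univ.filter P, Y i k * V k :=
        (Finset.sum_subtype (Finset.univ.filter P) (fun x => by simp)
          (fun k => Y i k * V k)).symm
    _ = ∑ k, Y i k * V k :=
        Finset.sum_filter_of_ne (fun x _ hx => by_contra fun h => hx (h1 x h))

/-- Network whose buses partition as {0} ∪ A₁ ∪ ⋯ ∪ A_m with slack bus 0 (voltage v₀)
and Y_{ab} = Y_{ba} = 0 whenever a ∈ A_j, b ∈ A_k, j ≠ k. Non-slack buses in `PQ`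
enforce V_i conj((YV)_i) = s_i; the remaining non-slack (PV) buses enforce
Re(V_i conj((YV)_i)) = p_i and |V_i| = w_i. The cardinality of the solution set of the
full network equals the product over j of the cardinalities of the solution sets of the
subnetworks on buses {0} ∪ A_j (with the principal submatrices of Y, the same bus
specifications, and slack voltage v₀). -/
theorem stmt5 (n m : ℕ) [NeZero n] (Y : Matrix (Fin n) (Fin n) ℂ) (v₀ : ℂ)
    (A : Fin m → Set (Fin n))
    (hcover : ∀ i : Fin n, i = 0 ∨ ∃ j, i ∈ A j)
    (h0 : ∀ j, (0 : Fin n) ∉ A j)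
    (hdisj : ∀ j k, j ≠ k → Disjoint (A j) (A k))
    (hY : ∀ j k, j ≠ k → ∀ a ∈ A j, ∀ b ∈ A k, Y a b = 0 ∧ Y b a = 0)
    (PQ : Set (Fin n)) (s : Fin n → ℂ) (p w : Fin n → ℝ) :
    Cardinal.mk
      ↥{V : Fin n → ℂ | V 0 = v₀ ∧ ∀ i, i ≠ 0 →
        (i ∈ PQ → V i * (starRingEnd ℂ) (Y.mulVec V i) = s i) ∧
        (i ∉ PQ → (V i * (starRingEnd ℂ) (Y.mulVec V i)).re = p i ∧
          ‖V i‖ = w i)} =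
    ∏ j : Fin m,
      Cardinal.mk
        ↥{W : {i : Fin n // i = 0 ∨ i ∈ A j} → ℂ | W ⟨0, Or.inl rfl⟩ = v₀ ∧
          ∀ i : {i : Fin n // i = 0 ∨ i ∈ A j}, i.val ≠ 0 →
            (i.val ∈ PQ →
              W i * (starRingEnd ℂ)
                ((Y.submatrix Subtype.val Subtype.val).mulVec W i) = s i.val) ∧
            (i.val ∉ PQ →
              (W i * (starRingEnd ℂ)
                ((Y.submatrix Subtype.val Subtype.val).mulVec W i)).re = p i.val ∧
              ‖W i‖ = w i.val)} := by
  classical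
  set T : Set (Fin n → ℂ) :=
    {V : Fin n → ℂ | V 0 = v₀ ∧ ∀ i, i ≠ 0 →
      (i ∈ PQ → V i * (starRingEnd ℂ) (Y.mulVec V i) = s i) ∧
      (i ∉ PQ → (V i * (starRingEnd ℂ) (Y.mulVec V i)).re = p i ∧
        ‖V i‖ = w i)} with hT
  set S : ∀ j : Fin m, Set ({i : Fin n // i = 0 ∨ i ∈ A j} → ℂ) := fun j =>
    {W : {i : Fin n // i = 0 ∨ i ∈ A j} → ℂ | W ⟨0, Or.inl rfl⟩ = v₀ ∧
      ∀ i : {i : Fin n // i = 0 ∨ i ∈ A j}, i.val ≠ 0 →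
        (i.val ∈ PQ →
          W i * (starRingEnd ℂ)
            ((Y.submatrix Subtype.val Subtype.val).mulVec W i) = s i.val) ∧
        (i.val ∉ PQ →
          (W i * (starRingEnd ℂ)
            ((Y.submatrix Subtype.val Subtype.val).mulVec W i)).re = p i.val ∧
          ‖W i‖ = w i.val)} with hS
  have huniq : ∀ {i : Fin n} {j k : Fin m}, i ∈ A j → i ∈ A k → j = k := by
    intro i j k hij hik
    by_contra h
    exact Set.disjoint_left.1 (hdisj j k h) hij hik
  have hzY : ∀ (j : Fin m) (i : Fin n), i ∈ A j →
      ∀ k, ¬(k = 0 ∨ k ∈ A j) → Y i k = 0 := by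
    intro j i hi k hk
    push_neg at hk
    rcases hcover k with h | ⟨j', hj'⟩
    · exact absurd h hk.1
    · have hne : j' ≠ j := fun h => hk.2 (h ▸ hj')
      exact (hY j' j hne k hj' i hi).2
  -- choice of block for a non-slack bus
  have hch : ∀ i : Fin n, i ≠ 0 → ∃ j, i ∈ A j := fun i hi =>
    (hcover i).resolve_left hi
  let ji : ∀ i : Fin n, i ≠ 0 → Fin m := fun i hi => (hch i hi).choose
  have hji : ∀ (i : Fin n) (hi : i ≠ 0), i ∈ A (ji i hi) := fun i hi =>
    (hch i hi).choose_spec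
  -- the reconstruction map
  let Vfun : (∀ j, ↥(S j)) → Fin n → ℂ := fun W i =>
    if h : i = 0 then v₀ else (W (ji i h)).1 ⟨i, Or.inr (hji i h)⟩
  have hrestr : ∀ (W : ∀ j, ↥(S j)) (j : Fin m)
      (k : {k : Fin n // k = 0 ∨ k ∈ A j}), (W j).1 k = Vfun W k.val := by
    intro W j k
    rcases k with ⟨k, hk | hk⟩
    · subst hk
      simp only [Vfun, dif_pos rfl]
      exact (W j).2.1
    · have hk0 : k ≠ 0 := fun h => h0 j (h ▸ hk)
      simp only [Vfun, dif_neg hk0]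
      obtain rfl : ji k hk0 = j := huniq (hji k hk0) hk
      rfl
  -- forward restriction map
  have hto : ∀ (V : ↥T) (j : Fin m),
      (fun i : {i : Fin n // i = 0 ∨ i ∈ A j} => V.1 i.val) ∈ S j := by
    intro V j
    refine ⟨V.2.1, ?_⟩
    intro i hi
    have hiA : i.val ∈ A j := i.2.resolve_left hi
    have hmv : (Y.submatrix Subtype.val Subtype.val).mulVec
        (fun k : {i : Fin n // i = 0 ∨ i ∈ A j} => V.1 k.val) i
        = Y.mulVec V.1 i.val := by
      exact aux_mulVec Y (fun k => k = 0 ∨ k ∈ A j) V.1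
        (fun k => V.1 k.val) i.val i.2 (fun _ => rfl) (hzY j i.val hiA)
    rw [hmv]
    exact V.2.2 i.val hi
  have hfrom : ∀ W : ∀ j, ↥(S j), Vfun W ∈ T := by
    intro W
    refine ⟨dif_pos rfl, ?_⟩
    intro i hi
    have hiA : i ∈ A (ji i hi) := hji i hi
    have hmv : Y.mulVec (Vfun W) i
        = (Y.submatrix Subtype.val Subtype.val).mulVec (W (ji i hi)).1
            (⟨i, Or.inr hiA⟩ : {k : Fin n // k = 0 ∨ k ∈ A (ji i hi)}) := by
      exact (aux_mulVec Y (fun k => k = 0 ∨ k ∈ A (ji i hi)) (Vfun W)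
        (W (ji i hi)).1 i (Or.inr hiA) (hrestr W (ji i hi))
        (hzY (ji i hi) i hiA)).symm
    have hvi : Vfun W i = (W (ji i hi)).1
        (⟨i, Or.inr hiA⟩ : {k : Fin n // k = 0 ∨ k ∈ A (ji i hi)}) := by
      simp only [Vfun, dif_neg hi]
    rw [hmv, hvi]
    exact (W (ji i hi)).2.2 (⟨i, Or.inr hiA⟩ : {k : Fin n // k = 0 ∨ k ∈ A (ji i hi)}) hi
  have e : ↥T ≃ ∀ j, ↥(S j) :=
    { toFun := fun V j => ⟨fun i => V.1 i.val, hto V j⟩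
      invFun := fun W => ⟨Vfun W, hfrom W⟩
      left_inv := by
        intro V
        refine Subtype.ext (funext fun i => ?_)
        by_cases h : i = 0
        · subst h; simp only [Vfun, dif_pos rfl]; exact V.2.1.symm
        · simp only [Vfun, dif_neg h]
      right_inv := by
        intro W
        funext j
        refine Subtype.ext (funext fun k => ?_)
        exact (hrestr W j k).symm }
  have hprod : (∏ j, Cardinal.mk ↥(S j))
      = Cardinal.prod (fun j => Cardinal.mk ↥(S j)) := by
    rw [Cardinal.prod_eq_of_fintype, Cardinal.lift_id]
  rw [hprod, ← Cardinal.mk_pi]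
  exact Cardinal.mk_congr e
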